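/- ℓ₁ (Lee) minimum distance of twisted GRS codes: Let q be prime, let α₁,…,α_n ∈ F_q be distinct and nonzero (so n ≤ q−1), and let 1 ≤ k ≤ n. Then every nonzero codeword c of the code GRS_{q,k}(α,α) = {(α₁u(α₁),…,α_n u(α_n)) : u ∈ F_q[X], deg u < k} satisfies ‖c‖₁ ≥ ((n+1)² − k²)/(4k), and this quantity is strictly greater than ((1 − R²)/(4R))·n where R = k/n; here ‖c‖₁ is computed by lifting each coordinate of c to its representative in [−q/2, q/2) ∩ ℤ. -/

import Mathlib

noncomputable section

/-- The lift of `x : ZMod q` to its distinguished integer representative in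
`[−q/2, q/2) ∩ ℤ`. -/
def zlift (q : ℕ) (x : ZMod q) : ℤ :=
  if 2 * x.val < q then (x.val : ℤ) else (x.val : ℤ) - q

lemma zlift_intCast (q : ℕ) [NeZero q] (x : ZMod q) : ((zlift q x : ℤ) : ZMod q) = x := by
  unfold zlift
  split <;> push_cast <;>
    simp [ZMod.natCast_val, ZMod.cast_id, ZMod.natCast_self]

lemma gauss_sum_aux (a b : ℤ) (T : ℕ) :
    ∑ t ∈ Finset.range T, (a - b * (2 * (t : ℤ) + 1)) = T * a - b * (T : ℤ) ^ 2 := by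
  induction T with
  | zero => simp
  | succ T ih =>
    rw [Finset.sum_range_succ, ih]
    push_cast
    ring

/-- ℓ₁ (Lee) minimum distance of twisted GRS codes: for prime `q`, distinct nonzero
evaluation points `α`, and `1 ≤ k ≤ n`, every nonzero codeword
`c = (α₁u(α₁),…,α_n u(α_n))` with `deg u < k` satisfies
`‖c‖₁ ≥ ((n+1)² − k²)/(4k) > ((1 − R²)/(4R))·n`, `R = k/n`. -/
theorem ell1_min_dist_twisted_GRS (q : ℕ) (hq : Nat.Prime q) (n k : ℕ)
    (hk1 : 1 ≤ k) (hkn : k ≤ n)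
    (α : Fin n → ZMod q) (hinj : Function.Injective α) (hα0 : ∀ i, α i ≠ 0)
    (u : Polynomial (ZMod q)) (hu : u.degree < (k : WithBot ℕ))
    (c : Fin n → ZMod q) (hc : ∀ i, c i = α i * Polynomial.eval (α i) u)
    (hc0 : c ≠ 0) :
    (((n : ℝ) + 1) ^ 2 - (k : ℝ) ^ 2) / (4 * (k : ℝ)) ≤
        ∑ i, |(zlift q (c i) : ℝ)| ∧
      (1 - ((k : ℝ) / (n : ℝ)) ^ 2) / (4 * ((k : ℝ) / (n : ℝ))) * (n : ℝ) <
        (((n : ℝ) + 1) ^ 2 - (k : ℝ) ^ 2) / (4 * (k : ℝ)) := by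
  haveI : Fact (Nat.Prime q) := ⟨hq⟩
  have hu0 : u ≠ 0 := by
    rintro rfl
    exact hc0 (funext fun i => by simp [hc i])
  have hudeg : u.natDegree ≤ k - 1 := by
    have : u.natDegree < k := (Polynomial.natDegree_lt_iff_degree_lt hu0).2 hu
    omega
  -- each value of `ZMod q` is attained by `c` at most `k` times, `0` at most `k-1` times
  have fiber : ∀ s : ZMod q,
      (Finset.univ.filter fun i => c i = s).card ≤ if s = 0 then k - 1 else k := by
    intro s
    by_cases hs : s = 0
    · subst hs
      simp only [if_pos rfl]
      calc (Finset.univ.filter fun i => c i = 0).card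
          ≤ u.roots.toFinset.card := by
            apply Finset.card_le_card_of_injOn α
            · intro i hi
              simp only [Finset.mem_coe, Finset.mem_filter, Finset.mem_univ, true_and] at hi ⊢
              rw [hc i] at hi
              rcases mul_eq_zero.1 hi with h | h
              · exact absurd h (hα0 i)
              · rw [Multiset.mem_toFinset, Polynomial.mem_roots hu0]
                exact h
            · exact Set.injOn_of_injective hinj
        _ ≤ Multiset.card u.roots := u.roots.toFinset_card_le
        _ ≤ u.natDegree := u.card_roots'
        _ ≤ k - 1 := hudeg
    · simp only [if_neg hs]
      set p : Polynomial (ZMod q) := Polynomial.X * u - Polynomial.C s with hp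
      have hp0 : p ≠ 0 := by
        intro h
        have : p.coeff 0 = -s := by
          simp [hp, Polynomial.mul_coeff_zero]
        rw [h] at this
        simp only [Polynomial.coeff_zero] at this
        exact hs (by rw [← neg_neg s, ← this, neg_zero])
      have hpdeg : p.natDegree ≤ k := by
        refine le_trans (Polynomial.natDegree_sub_le _ _) ?_
        simp only [Polynomial.natDegree_C, max_le_iff]
        constructor
        · rw [Polynomial.natDegree_mul Polynomial.X_ne_zero hu0, Polynomial.natDegree_X]
          omega
        · omega
      calc (Finset.univ.filter fun i => c i = s).card
          ≤ p.roots.toFinset.card := by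
            apply Finset.card_le_card_of_injOn α
            · intro i hi
              simp only [Finset.mem_coe, Finset.mem_filter, Finset.mem_univ, true_and] at hi ⊢
              rw [Multiset.mem_toFinset, Polynomial.mem_roots hp0]
              show p.eval (α i) = 0
              rw [hp]
              simp only [Polynomial.eval_sub, Polynomial.eval_mul, Polynomial.eval_X,
                Polynomial.eval_C]
              rw [← hc i, hi]
              ring
            · exact Set.injOn_of_injective hinj
        _ ≤ Multiset.card p.roots := p.roots.toFinset_card_le
        _ ≤ p.natDegree := p.card_roots'
        _ ≤ k := hpdeg
  -- counting: at most k(2t+1)-1 coordinates have |zlift| ≤ t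
  have count : ∀ t : ℕ,
      (Finset.univ.filter fun i => |zlift q (c i)| ≤ (t : ℤ)).card + 1 ≤ k * (2 * t + 1) := by
    intro t
    set S := Finset.univ.filter fun i : Fin n => |zlift q (c i)| ≤ (t : ℤ) with hS
    have hmap : ∀ i ∈ S, zlift q (c i) ∈ Finset.Icc (-(t : ℤ)) t := by
      intro i hi
      simp only [hS, Finset.mem_filter, Finset.mem_univ, true_and] at hi
      rw [Finset.mem_Icc]
      exact abs_le.1 hi
    have hcard := Finset.card_eq_sum_card_fiberwise hmap
    have hfib : ∀ s : ℤ,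
        (S.filter fun i => zlift q (c i) = s).card ≤ if s = 0 then k - 1 else k := by
      intro s
      have hsub : (S.filter fun i => zlift q (c i) = s) ⊆
          Finset.univ.filter fun i => c i = ((s : ℤ) : ZMod q) := by
        intro i hi
        simp only [hS, Finset.mem_filter, Finset.mem_univ, true_and] at hi ⊢
        rw [← hi.2, zlift_intCast]
      refine le_trans (Finset.card_le_card hsub) ?_
      by_cases h0 : s = 0
      · subst h0
        simpa using fiber 0
      · simp only [if_neg h0]
        refine le_trans (fiber _) ?_
        split <;> omega
    have h0mem : (0 : ℤ) ∈ Finset.Icc (-(t : ℤ)) t := by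
      simp
    have hIcc : (Finset.Icc (-(t : ℤ)) t).card = 2 * t + 1 := by
      rw [Int.card_Icc]
      omega
    have hsplit := Finset.add_sum_erase _ (fun s => (S.filter fun i => zlift q (c i) = s).card)
        h0mem
    have herase : ∑ s ∈ (Finset.Icc (-(t : ℤ)) t).erase 0,
        (S.filter fun i => zlift q (c i) = s).card ≤ 2 * t * k := by
      calc ∑ s ∈ (Finset.Icc (-(t : ℤ)) t).erase 0,
            (S.filter fun i => zlift q (c i) = s).card
          ≤ ∑ _s ∈ (Finset.Icc (-(t : ℤ)) t).erase 0, k := by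
            apply Finset.sum_le_sum
            intro s hs
            have := hfib s
            rw [if_neg (Finset.ne_of_mem_erase hs)] at this
            exact this
        _ = ((Finset.Icc (-(t : ℤ)) t).erase 0).card * k := by
            rw [Finset.sum_const, smul_eq_mul]
        _ = 2 * t * k := by
            rw [Finset.card_erase_of_mem h0mem, hIcc, Nat.add_sub_cancel]
    have h00 : (S.filter fun i => zlift q (c i) = 0).card ≤ k - 1 := by
      have := hfib 0
      rwa [if_pos rfl] at this
    beta_reduce at hsplit
    have hS2 : S.card ≤ (k - 1) + 2 * t * k := by omega
    have hke : k * (2 * t + 1) = 2 * t * k + k := by ring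
    omega
  -- lower bound on the count of big coordinates
  have step1 : ∀ t : ℕ, (n : ℤ) + 1 - k * (2 * (t : ℤ) + 1) ≤
      ((Finset.univ.filter fun i => (t : ℤ) < |zlift q (c i)|).card : ℤ) := by
    intro t
    have hsplit : (Finset.univ.filter fun i : Fin n => |zlift q (c i)| ≤ (t : ℤ)).card +
        (Finset.univ.filter fun i : Fin n => (t : ℤ) < |zlift q (c i)|).card = n := by
      have h := Finset.card_filter_add_card_filter_not
        (s := (Finset.univ : Finset (Fin n)))
        (p := fun i : Fin n => |zlift q (c i)| ≤ (t : ℤ))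
      simp only [not_le, Finset.filter_congr_decidable, Finset.card_univ,
        Fintype.card_fin] at h
      exact h
    have hcount := count t
    have h1 : ((Finset.univ.filter fun i : Fin n => |zlift q (c i)| ≤ (t : ℤ)).card : ℤ) + 1 ≤
        (k : ℤ) * (2 * t + 1) := by exact_mod_cast hcount
    have h2 : ((Finset.univ.filter fun i : Fin n => |zlift q (c i)| ≤ (t : ℤ)).card : ℤ) +
        ((Finset.univ.filter fun i : Fin n => (t : ℤ) < |zlift q (c i)|).card : ℤ) = n := by
      exact_mod_cast hsplit
    linarith
  -- summation over levels bounds the ℓ₁ norm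
  have step2 : ∀ T : ℕ, ∑ t ∈ Finset.range T,
      ((Finset.univ.filter fun i => (t : ℤ) < |zlift q (c i)|).card : ℤ) ≤
      ∑ i, |zlift q (c i)| := by
    intro T
    have hswap : ∑ t ∈ Finset.range T,
        ((Finset.univ.filter fun i : Fin n => (t : ℤ) < |zlift q (c i)|).card : ℤ) =
        ∑ i : Fin n,
          (((Finset.range T).filter fun t : ℕ => (t : ℤ) < |zlift q (c i)|).card : ℤ) := by
      simp only [Finset.card_filter]
      push_cast
      rw [Finset.sum_comm]
    rw [hswap]
    apply Finset.sum_le_sum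
    intro i _
    have habs : (0 : ℤ) ≤ |zlift q (c i)| := abs_nonneg _
    have hsub : ((Finset.range T).filter fun t : ℕ => (t : ℤ) < |zlift q (c i)|) ⊆
        Finset.range (|zlift q (c i)|).toNat := by
      intro t ht
      simp only [Finset.mem_filter, Finset.mem_range] at ht ⊢
      omega
    calc (((Finset.range T).filter fun t : ℕ => (t : ℤ) < |zlift q (c i)|).card : ℤ)
        ≤ ((Finset.range (|zlift q (c i)|).toNat).card : ℤ) := by
          exact_mod_cast Finset.card_le_card hsub
      _ = |zlift q (c i)| := by
          rw [Finset.card_range, Int.toNat_of_nonneg habs]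
  -- the key integer inequality
  have key : ((n : ℤ) + 1) ^ 2 - (k : ℤ) ^ 2 ≤ 4 * k * ∑ i, |zlift q (c i)| := by
    set T := (n + 1 + k) / (2 * k) with hTdef
    have hdm := Nat.div_add_mod (n + 1 + k) (2 * k)
    have hm : (n + 1 + k) % (2 * k) < 2 * k := Nat.mod_lt _ (by omega)
    set m := (n + 1 + k) % (2 * k) with hmdef
    have hsum : ∑ t ∈ Finset.range T, ((n : ℤ) + 1 - k * (2 * (t : ℤ) + 1)) ≤
        ∑ i, |zlift q (c i)| :=
      le_trans (Finset.sum_le_sum fun t _ => step1 t) (step2 T)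
    rw [gauss_sum_aux] at hsum
    have heq : (n : ℤ) + 1 = 2 * k * T + m - k := by
      have h : 2 * k * T + m = n + 1 + k := hdm
      have h' : 2 * (k : ℤ) * T + m = (n : ℤ) + 1 + k := by exact_mod_cast h
      linarith
    have hr2 : ((m : ℤ) - k) ^ 2 ≤ (k : ℤ) ^ 2 := by
      have h1 : -(k : ℤ) ≤ (m : ℤ) - k := by
        have : (0 : ℤ) ≤ m := Int.natCast_nonneg m
        linarith
      have h2 : (m : ℤ) - k ≤ k := by
        have : (m : ℤ) < 2 * k := by exact_mod_cast hm
        linarith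
      nlinarith
    have hmul : 4 * (k : ℤ) * ((T : ℤ) * ((n : ℤ) + 1) - k * (T : ℤ) ^ 2) ≤
        4 * k * ∑ i, |zlift q (c i)| := by
      have hk0 : (0 : ℤ) ≤ 4 * k := by positivity
      exact mul_le_mul_of_nonneg_left hsum hk0
    nlinarith [hmul, heq, hr2]
  have hk0R : (0 : ℝ) < k := by exact_mod_cast hk1
  have hn0R : (0 : ℝ) < n := by
    have : 1 ≤ n := le_trans hk1 hkn
    exact_mod_cast this
  constructor
  · rw [div_le_iff₀ (by positivity)]
    have hcast : ∑ i, |(zlift q (c i) : ℝ)| = ((∑ i, |zlift q (c i)| : ℤ) : ℝ) := by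
      push_cast
      rfl
    rw [hcast]
    have : (((n : ℤ) + 1) ^ 2 - (k : ℤ) ^ 2 : ℝ) ≤ ((4 * k * ∑ i, |zlift q (c i)| : ℤ) : ℝ) := by
      exact_mod_cast key
    push_cast at this
    nlinarith [this]
  · have hrw : (1 - ((k : ℝ) / n) ^ 2) / (4 * ((k : ℝ) / n)) * n =
        ((n : ℝ) ^ 2 - k ^ 2) / (4 * k) := by
      field_simp
    rw [hrw, div_lt_div_iff₀ (by positivity) (by positivity)]
    nlinarith
end
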